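/- Let Q_n be the generator of the symmetric exclusion process on the complete graph K_n with rate α, and R_n the generator of a symmetric exclusion process on a graph G_n with V(G_n) = V(K_n), maximum degree d, and rate β. Fix ℓ ≤ ⌊n/2⌋, and let {ψ_i} with eigenvalues {λ_i} be an orthonormal eigenbasis of -Q_n^(ℓ), and {χ_i} with eigenvalues {μ_i} an orthonormal eigenbasis of -R_n^(ℓ). Then for any k > 0 and k' ≥ 1 with α k'(n - k' + 1) ≥ k, span{ψ_i : λ_i ≤ k} ⊆ span{χ_i : μ_i ≤ 2 β k' d}. -/

import Mathlib

open Finset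

/-- Swap the values of a configuration at two vertices. -/
def swapAt {V : Type*} [DecidableEq V] (x : V → Bool) (u v : V) : V → Bool :=
  fun w => if w = u then x v else if w = v then x u else x w

/-- Number of black marbles (`true` coordinates) of a configuration. -/
def countB {V : Type*} [Fintype V] (x : V → Bool) : ℕ :=
  (Finset.univ.filter fun v => x v = true).card

/-- The negative generator `-Q` of the symmetric exclusion process on `G` with rate `α`:
`(-Qf)(x) = α Σ_{e ∈ E(G)} (f x - f x_e)`, written as half the sum over ordered adjacent pairs. -/
noncomputable def negGen {V : Type*} [Fintype V] [DecidableEq V] (G : SimpleGraph V) [DecidableRel G.Adj]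
    (α : ℝ) (f : (V → Bool) → ℝ) (x : V → Bool) : ℝ :=
  (α / 2) * ∑ u : V, ∑ v : V, if G.Adj u v then f x - f (swapAt x u v) else 0

/-- `ψ_+(x) = Σ_{v : x(v)=0} ψ(x_v)`, adding a black marble at `v`. -/
def plusOp {V : Type*} [Fintype V] [DecidableEq V] (ψ : (V → Bool) → ℝ) (x : V → Bool) : ℝ :=
  ∑ v ∈ Finset.univ.filter (fun v => x v = false), ψ (Function.update x v true)

/-- `ψ_-(x) = Σ_{v : x(v)=1} ψ(x_v)`, removing the black marble at `v`. -/
def minusOp {V : Type*} [Fintype V] [DecidableEq V] (ψ : (V → Bool) → ℝ) (x : V → Bool) : ℝ :=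
  ∑ v ∈ Finset.univ.filter (fun v => x v = true), ψ (Function.update x v false)

/-- Inner product at level `ℓ` with respect to the uniform measure on `ℓ`-subsets. -/
noncomputable def innerL {V : Type*} [Fintype V] [DecidableEq V] (ℓ : ℕ) (f g : (V → Bool) → ℝ) : ℝ :=
  (((Fintype.card V).choose ℓ : ℝ))⁻¹ *
    ∑ x ∈ Finset.univ.filter (fun x : V → Bool => countB x = ℓ), f x * g x

/-- Inner product on the full configuration space with respect to the uniform measure. -/
noncomputable def innerF {V : Type*} [Fintype V] [DecidableEq V] (f g : (V → Bool) → ℝ) : ℝ :=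
  ((2 : ℝ) ^ (Fintype.card V))⁻¹ * ∑ x : V → Bool, f x * g x

set_option linter.unusedSectionVars false
set_option linter.unusedVariables false

section AuxLemmas

variable {V : Type*} [Fintype V] [DecidableEq V]

lemma swapAt_comp (x : V → Bool) (u v : V) : swapAt x u v = x ∘ (Equiv.swap u v) := by
  funext w
  simp only [swapAt, Function.comp, Equiv.swap_apply_def]
  split_ifs <;> rfl

lemma swapAt_eq_self {x : V → Bool} {u v : V} (h : x u = x v) : swapAt x u v = x := by
  funext w
  simp only [swapAt]
  split_ifs with h1 h2 <;> simp_all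

lemma swapAt_comm (x : V → Bool) (u v : V) : swapAt x u v = swapAt x v u := by
  funext w
  simp only [swapAt]
  split_ifs with h1 h2 <;> simp_all

lemma swapAt_swapAt (x : V → Bool) (u v : V) : swapAt (swapAt x u v) u v = x := by
  funext w
  simp only [swapAt]
  split_ifs with h1 h2 <;> simp_all

lemma countB_swapAt (x : V → Bool) (u v : V) : countB (swapAt x u v) = countB x := by
  rw [swapAt_comp, countB, countB]
  apply Finset.card_nbij' (i := fun w => Equiv.swap u v w) (j := fun w => Equiv.swap u v w) <;>
    simp [Function.comp, Set.MapsTo, Set.LeftInvOn, Set.RightInvOn]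

lemma countB_le (x : V → Bool) : countB x ≤ Fintype.card V :=
  le_trans (Finset.card_filter_le _ _) (le_of_eq (Finset.card_univ))

lemma countB_update_true {x : V → Bool} {v : V} (h : x v = false) :
    countB (Function.update x v true) = countB x + 1 := by
  classical
  rw [countB, countB]
  have : (Finset.univ.filter fun w => Function.update x v true w = true)
      = insert v (Finset.univ.filter fun w => x w = true) := by
    ext w
    rcases eq_or_ne w v with rfl | hw
    · simp [Function.update_self]
    · simp [Function.update_of_ne hw, hw]
  rw [this, Finset.card_insert_of_notMem (by simp [h])]

lemma countB_update_false {x : V → Bool} {v : V} (h : x v = true) :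
    countB x = countB (Function.update x v false) + 1 := by
  classical
  rw [countB, countB]
  have : (Finset.univ.filter fun w => x w = true)
      = insert v (Finset.univ.filter fun w => Function.update x v false w = true) := by
    ext w
    rcases eq_or_ne w v with rfl | hw
    · simp [Function.update_self, h]
    · simp [Function.update_of_ne hw, hw]
  rw [this, Finset.card_insert_of_notMem (by simp [Function.update_self])]

lemma negGen_support (G : SimpleGraph V) [DecidableRel G.Adj] (β : ℝ) {f : (V → Bool) → ℝ} {j : ℕ}
    (hf : ∀ y, countB y ≠ j → f y = 0) {x : V → Bool} (hx : countB x ≠ j) :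
    negGen G β f x = 0 := by
  have : ∀ u v : V, (if G.Adj u v then f x - f (swapAt x u v) else 0) = 0 := by
    intro u v
    split_ifs
    · rw [hf x hx, hf _ (by rw [countB_swapAt]; exact hx), sub_zero]
    · rfl
  simp only [negGen]
  rw [Finset.sum_congr rfl (fun u _ => Finset.sum_congr rfl (fun v _ => this u v))]
  simp

lemma minusOp_support {f : (V → Bool) → ℝ} {j : ℕ} (hf : ∀ y, countB y ≠ j → f y = 0)
    {x : V → Bool} (hx : countB x ≠ j + 1) : minusOp f x = 0 := by
  rw [minusOp]
  apply Finset.sum_eq_zero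
  intro w hw
  simp only [Finset.mem_filter] at hw
  apply hf
  intro hc
  exact hx (by rw [countB_update_false hw.2, hc])

lemma plusOp_support {f : (V → Bool) → ℝ} {j : ℕ} (hf : ∀ y, countB y ≠ j + 1 → f y = 0)
    {x : V → Bool} (hx : countB x ≠ j) : plusOp f x = 0 := by
  rw [plusOp]
  apply Finset.sum_eq_zero
  intro w hw
  simp only [Finset.mem_filter] at hw
  apply hf
  intro hc
  exact hx (by
    have := countB_update_true hw.2
    omega)

/-- the permutation given by swapping marbles at u,v -/
def swapPerm (u v : V) : Equiv.Perm (V → Bool) :=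
  Function.Involutive.toPerm (fun x => swapAt x u v) (fun x => swapAt_swapAt x u v)

lemma sum_swapAt_reindex (u v : V) (F : (V → Bool) → ℝ) :
    ∑ x : V → Bool, F (swapAt x u v) = ∑ x : V → Bool, F x :=
  Equiv.sum_comp (swapPerm u v) F
lemma sum_negGen_mul (G : SimpleGraph V) [DecidableRel G.Adj] (β : ℝ) (f g : (V → Bool) → ℝ) :
    ∑ x : V → Bool, negGen G β f x * g x
      = (β / 2) * ∑ u : V, ∑ v : V, ∑ x : V → Bool,
          (if G.Adj u v then (f x - f (swapAt x u v)) * g x else 0) := by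
  simp only [negGen]
  have step : ∀ x : V → Bool,
      (β / 2 * ∑ u : V, ∑ v : V, if G.Adj u v then f x - f (swapAt x u v) else 0) * g x
        = β / 2 * ∑ u : V, ∑ v : V, (if G.Adj u v then (f x - f (swapAt x u v)) * g x else 0) := by
    intro x
    rw [mul_assoc, Finset.sum_mul]
    congr 1
    apply Finset.sum_congr rfl; intro u _
    rw [Finset.sum_mul]
    apply Finset.sum_congr rfl; intro v _
    split_ifs <;> ring
  rw [Finset.sum_congr rfl (fun x _ => step x), ← Finset.mul_sum]
  congr 1
  rw [Finset.sum_comm]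
  apply Finset.sum_congr rfl; intro u _
  rw [Finset.sum_comm]

lemma negGen_symm (G : SimpleGraph V) [DecidableRel G.Adj] (β : ℝ) (f g : (V → Bool) → ℝ) :
    ∑ x : V → Bool, negGen G β f x * g x = ∑ x : V → Bool, f x * negGen G β g x := by
  have h2 : ∑ x : V → Bool, f x * negGen G β g x = ∑ x : V → Bool, negGen G β g x * f x := by
    congr 1; funext x; ring
  rw [sum_negGen_mul, h2, sum_negGen_mul]
  congr 1
  apply Finset.sum_congr rfl; intro u _
  apply Finset.sum_congr rfl; intro v _
  by_cases hA : G.Adj u v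
  · simp only [hA, if_true]
    have key : ∑ x : V → Bool, f (swapAt x u v) * g x = ∑ x : V → Bool, g (swapAt x u v) * f x := by
      rw [← sum_swapAt_reindex u v (fun x => g (swapAt x u v) * f x)]
      apply Finset.sum_congr rfl; intro x _
      rw [swapAt_swapAt]; ring
    simp only [sub_mul]
    rw [Finset.sum_sub_distrib, Finset.sum_sub_distrib, key]
    congr 1
    apply Finset.sum_congr rfl; intro x _; ring
  · simp [hA]

lemma minusOp_adjoint (f g : (V → Bool) → ℝ) :
    ∑ x : V → Bool, minusOp f x * g x = ∑ x : V → Bool, f x * plusOp g x := by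
  simp only [minusOp, plusOp, Finset.sum_mul, Finset.mul_sum]
  simp only [Finset.sum_filter]
  rw [Finset.sum_comm]
  conv_rhs => rw [Finset.sum_comm]
  apply Finset.sum_congr rfl; intro w _
  rw [← Finset.sum_filter, ← Finset.sum_filter]
  apply Finset.sum_nbij' (i := fun x => Function.update x w false)
    (j := fun y => Function.update y w true)
  · intro x hx; simp only [Finset.mem_filter] at *; simp
  · intro y hy; simp only [Finset.mem_filter] at *; simp
  · intro x hx
    simp only [Finset.mem_filter, Finset.mem_univ, true_and] at hx
    rw [Function.update_idem, ← hx, Function.update_eq_self]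
  · intro y hy
    simp only [Finset.mem_filter, Finset.mem_univ, true_and] at hy
    rw [Function.update_idem, ← hy, Function.update_eq_self]
  · intro x hx
    simp only [Finset.mem_filter, Finset.mem_univ, true_and] at hx
    rw [Function.update_idem, ← hx, Function.update_eq_self]
lemma swapAt_apply_eq (x : V → Bool) (u v w : V) : swapAt x u v w = x (Equiv.swap u v w) := by
  rw [swapAt_comp]; rfl

lemma update_swapAt (x : V → Bool) (u v w : V) (b : Bool) :
    Function.update (swapAt x u v) w b = swapAt (Function.update x (Equiv.swap u v w) b) u v := by
  funext z
  simp only [Function.update_apply, swapAt, Equiv.swap_apply_def]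
  split_ifs <;> simp_all

lemma negGen_minusOp_comm (G : SimpleGraph V) [DecidableRel G.Adj] (β : ℝ) (f : (V → Bool) → ℝ)
    (x : V → Bool) : negGen G β (minusOp f) x = minusOp (negGen G β f) x := by
  have hR : minusOp (negGen G β f) x
      = (β / 2) * ∑ u : V, ∑ v : V, (if G.Adj u v then
          minusOp f x - ∑ w ∈ Finset.univ.filter (fun w => x w = true),
            f (swapAt (Function.update x w false) u v) else 0) := by
    rw [minusOp]
    simp only [negGen]
    rw [← Finset.mul_sum]
    congr 1
    rw [Finset.sum_comm]
    apply Finset.sum_congr rfl; intro u _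
    rw [Finset.sum_comm]
    apply Finset.sum_congr rfl; intro v _
    split_ifs with hA
    · rw [Finset.sum_sub_distrib, minusOp]
    · exact Finset.sum_const_zero
  have hL : negGen G β (minusOp f) x
      = (β / 2) * ∑ u : V, ∑ v : V, (if G.Adj u v then
          minusOp f x - ∑ w ∈ Finset.univ.filter (fun w => swapAt x u v w = true),
            f (Function.update (swapAt x u v) w false) else 0) := rfl
  rw [hL, hR]
  congr 1
  apply Finset.sum_congr rfl; intro u _
  apply Finset.sum_congr rfl; intro v _
  split_ifs with hA
  · congr 1
    refine Finset.sum_nbij' (fun w => Equiv.swap u v w) (fun w => Equiv.swap u v w) ?_ ?_ ?_ ?_ ?_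
    · intro w hw
      simp only [Finset.mem_filter, Finset.mem_univ, true_and] at *
      rwa [swapAt_apply_eq] at hw
    · intro w hw
      simp only [Finset.mem_filter, Finset.mem_univ, true_and] at *
      rwa [swapAt_apply_eq, Equiv.swap_apply_self]
    · intro w _; exact Equiv.swap_apply_self u v w
    · intro w _; exact Equiv.swap_apply_self u v w
    · intro w _
      rw [update_swapAt]
  · rfl

lemma negGen_plusOp_comm (G : SimpleGraph V) [DecidableRel G.Adj] (β : ℝ) (f : (V → Bool) → ℝ)
    (x : V → Bool) : negGen G β (plusOp f) x = plusOp (negGen G β f) x := by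
  have hR : plusOp (negGen G β f) x
      = (β / 2) * ∑ u : V, ∑ v : V, (if G.Adj u v then
          plusOp f x - ∑ w ∈ Finset.univ.filter (fun w => x w = false),
            f (swapAt (Function.update x w true) u v) else 0) := by
    rw [plusOp]
    simp only [negGen]
    rw [← Finset.mul_sum]
    congr 1
    rw [Finset.sum_comm]
    apply Finset.sum_congr rfl; intro u _
    rw [Finset.sum_comm]
    apply Finset.sum_congr rfl; intro v _
    split_ifs with hA
    · rw [Finset.sum_sub_distrib, plusOp]
    · exact Finset.sum_const_zero
  have hL : negGen G β (plusOp f) x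
      = (β / 2) * ∑ u : V, ∑ v : V, (if G.Adj u v then
          plusOp f x - ∑ w ∈ Finset.univ.filter (fun w => swapAt x u v w = false),
            f (Function.update (swapAt x u v) w true) else 0) := rfl
  rw [hL, hR]
  congr 1
  apply Finset.sum_congr rfl; intro u _
  apply Finset.sum_congr rfl; intro v _
  split_ifs with hA
  · congr 1
    refine Finset.sum_nbij' (fun w => Equiv.swap u v w) (fun w => Equiv.swap u v w) ?_ ?_ ?_ ?_ ?_
    · intro w hw
      simp only [Finset.mem_filter, Finset.mem_univ, true_and] at *
      rwa [swapAt_apply_eq] at hw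
    · intro w hw
      simp only [Finset.mem_filter, Finset.mem_univ, true_and] at *
      rwa [swapAt_apply_eq, Equiv.swap_apply_self]
    · intro w _; exact Equiv.swap_apply_self u v w
    · intro w _; exact Equiv.swap_apply_self u v w
    · intro w _
      rw [update_swapAt]
  · rfl
lemma update_update_eq_swapAt {x : V → Bool} {w v : V} (hw : x w = true) (hv : x v = false) :
    Function.update (Function.update x w false) v true = swapAt x w v := by
  funext z
  simp only [Function.update_apply, swapAt]
  split_ifs <;> simp_all

lemma minusOp_plusOp (f : (V → Bool) → ℝ) (x : V → Bool) :
    minusOp (plusOp f) x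
      = (countB x : ℝ) * f x + ∑ w ∈ Finset.univ.filter (fun w => x w = true),
          ∑ v ∈ Finset.univ.filter (fun v => x v = false), f (swapAt x w v) := by
  rw [minusOp]
  have step : ∀ w ∈ Finset.univ.filter (fun w : V => x w = true),
      plusOp f (Function.update x w false)
        = f x + ∑ v ∈ Finset.univ.filter (fun v => x v = false), f (swapAt x w v) := by
    intro w hw
    simp only [Finset.mem_filter, Finset.mem_univ, true_and] at hw
    rw [plusOp]
    have hfilt : Finset.univ.filter (fun v => Function.update x w false v = false)
        = insert w (Finset.univ.filter (fun v => x v = false)) := by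
      ext z
      rcases eq_or_ne z w with rfl | hz
      · simp [Function.update_self]
      · simp [Function.update_of_ne hz, hz]
    rw [hfilt, Finset.sum_insert (by simp [hw])]
    congr 1
    · rw [Function.update_idem, ← hw, Function.update_eq_self]
    · apply Finset.sum_congr rfl
      intro v hv
      simp only [Finset.mem_filter, Finset.mem_univ, true_and] at hv
      rw [update_update_eq_swapAt hw hv]
  rw [Finset.sum_congr rfl step, Finset.sum_add_distrib, Finset.sum_const, countB]
  simp [nsmul_eq_mul]

lemma negGen_top_eq (α : ℝ) (f : (V → Bool) → ℝ) (x : V → Bool) :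
    negGen (⊤ : SimpleGraph V) α f x
      = α * ((countB x : ℝ) * ((Fintype.card V : ℝ) - countB x + 1)) * f x
        - α * minusOp (plusOp f) x := by
  classical
  set T := Finset.univ.filter (fun v => x v = true) with hT
  set F := Finset.univ.filter (fun v => x v = false) with hF
  have hcardF : (F.card : ℝ) = (Fintype.card V : ℝ) - countB x := by
    have hEq : F = Finset.univ.filter (fun v => ¬ (x v = true)) := by
      rw [hF]; ext v; simp
    have h1 : T.card + F.card = Fintype.card V := by
      rw [hT, hEq, ← Finset.card_univ]
      exact Finset.card_filter_add_card_filter_not _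
    have h2 : countB x ≤ Fintype.card V := countB_le x
    have : T.card = countB x := rfl
    push_cast [← h1, this]
    ring
  have hsplit : ∀ u v : V,
      (if (⊤ : SimpleGraph V).Adj u v then f x - f (swapAt x u v) else 0)
        = (if x u = true ∧ x v = false then f x - f (swapAt x u v) else 0)
          + (if x u = false ∧ x v = true then f x - f (swapAt x u v) else 0) := by
    intro u v
    cases hxu : x u <;> cases hxv : x v
    · have h0 : swapAt x u v = x := swapAt_eq_self (hxu.trans hxv.symm)
      simp [SimpleGraph.top_adj, h0, hxu, hxv, sub_self]
    · have hne : u ≠ v := fun h => by rw [h, hxv] at hxu; exact Bool.noConfusion hxu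
      simp [SimpleGraph.top_adj, hne, hxu, hxv]
    · have hne : u ≠ v := fun h => by rw [h, hxv] at hxu; exact Bool.noConfusion hxu
      simp [SimpleGraph.top_adj, hne, hxu, hxv]
    · have h0 : swapAt x u v = x := swapAt_eq_self (hxu.trans hxv.symm)
      simp [SimpleGraph.top_adj, h0, hxu, hxv, sub_self]
  have collect : ∀ (P Q : V → Prop) [DecidablePred P] [DecidablePred Q] (e : V → V → ℝ),
      (∑ u : V, ∑ v : V, if P u ∧ Q v then e u v else 0)
        = ∑ u ∈ Finset.univ.filter P, ∑ v ∈ Finset.univ.filter Q, e u v := by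
    intro P Q _ _ e
    rw [Finset.sum_filter]
    apply Finset.sum_congr rfl; intro u _
    by_cases hP : P u
    · simp only [hP, if_true, true_and, Finset.sum_filter]
    · simp [hP]
  have expand : negGen (⊤ : SimpleGraph V) α f x
      = (α / 2) * ((∑ u ∈ T, ∑ v ∈ F, (f x - f (swapAt x u v)))
          + ∑ u ∈ F, ∑ v ∈ T, (f x - f (swapAt x u v))) := by
    rw [negGen]
    congr 1
    rw [Finset.sum_congr rfl (fun u _ => Finset.sum_congr rfl (fun v _ => hsplit u v))]
    rw [Finset.sum_congr rfl (fun u (_ : u ∈ Finset.univ) => Finset.sum_add_distrib),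
      Finset.sum_add_distrib]
    congr 1
    · exact collect _ _ _
    · exact collect _ _ _
  have flip : ∑ u ∈ F, ∑ v ∈ T, (f x - f (swapAt x u v))
      = ∑ u ∈ T, ∑ v ∈ F, (f x - f (swapAt x u v)) := by
    rw [Finset.sum_comm]
    apply Finset.sum_congr rfl; intro u _
    apply Finset.sum_congr rfl; intro v _
    rw [swapAt_comm]
  have inner : ∑ u ∈ T, ∑ v ∈ F, (f x - f (swapAt x u v))
      = (countB x : ℝ) * ((Fintype.card V : ℝ) - countB x) * f x
        - ∑ u ∈ T, ∑ v ∈ F, f (swapAt x u v) := by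
    rw [Finset.sum_congr rfl (fun u (_ : u ∈ T) => Finset.sum_sub_distrib _ _),
      Finset.sum_sub_distrib]
    congr 1
    have hTc : (T.card : ℝ) = (countB x : ℝ) := rfl
    rw [Finset.sum_congr rfl (fun u (_ : u ∈ T) => Finset.sum_const _), Finset.sum_const]
    simp only [nsmul_eq_mul, smul_smul]
    rw [← hcardF, ← hTc]
    ring
  rw [expand, flip, inner, minusOp_plusOp]
  ring
lemma dirichlet_form (G : SimpleGraph V) [DecidableRel G.Adj] (β : ℝ) (f : (V → Bool) → ℝ) :
    ∑ x : V → Bool, f x * negGen G β f x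
      = (β / 4) * ∑ u : V, ∑ v : V,
          (if G.Adj u v then ∑ x : V → Bool, (f x - f (swapAt x u v)) ^ 2 else 0) := by
  have h0 : ∑ x : V → Bool, f x * negGen G β f x = ∑ x : V → Bool, negGen G β f x * f x := by
    apply Finset.sum_congr rfl; intro x _; ring
  rw [h0, sum_negGen_mul]
  have key : ∀ u v : V, (∑ x : V → Bool, (if G.Adj u v then (f x - f (swapAt x u v)) * f x else 0))
      = (1/2) * (if G.Adj u v then ∑ x : V → Bool, (f x - f (swapAt x u v)) ^ 2 else 0) := by
    intro u v
    split_ifs with hA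
    · have hre : ∑ x : V → Bool, f (swapAt x u v) ^ 2 = ∑ x : V → Bool, f x ^ 2 :=
        sum_swapAt_reindex u v (fun x => f x ^ 2)
      have e1 : ∑ x : V → Bool, (f x - f (swapAt x u v)) ^ 2
          = ∑ x : V → Bool, f x ^ 2 + ∑ x : V → Bool, f (swapAt x u v) ^ 2
            - 2 * ∑ x : V → Bool, f x * f (swapAt x u v) := by
        rw [← Finset.sum_add_distrib, Finset.mul_sum, ← Finset.sum_sub_distrib]
        apply Finset.sum_congr rfl; intro x _; ring
      have e2 : ∑ x : V → Bool, (f x - f (swapAt x u v)) * f x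
          = ∑ x : V → Bool, f x ^ 2 - ∑ x : V → Bool, f x * f (swapAt x u v) := by
        rw [← Finset.sum_sub_distrib]
        apply Finset.sum_congr rfl; intro x _; ring
      rw [e1, e2, hre]; ring
    · simp
  rw [Finset.sum_congr rfl (fun u (_ : u ∈ Finset.univ) =>
    Finset.sum_congr rfl (fun v (_ : v ∈ Finset.univ) => key u v))]
  rw [Finset.sum_congr rfl (fun u (_ : u ∈ Finset.univ) => (Finset.mul_sum _ _ _).symm),
    ← Finset.mul_sum]
  ring

lemma dirichlet_nonneg (G : SimpleGraph V) [DecidableRel G.Adj] {β : ℝ} (hβ : 0 ≤ β)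
    (f : (V → Bool) → ℝ) : 0 ≤ ∑ x : V → Bool, f x * negGen G β f x := by
  rw [dirichlet_form]
  apply mul_nonneg (by linarith)
  apply Finset.sum_nonneg; intro u _
  apply Finset.sum_nonneg; intro v _
  split_ifs
  · exact Finset.sum_nonneg (fun x _ => sq_nonneg _)
  · exact le_refl 0
lemma degree_sum_ite (G : SimpleGraph V) [DecidableRel G.Adj] (u : V) (c : ℝ) :
    ∑ v : V, (if G.Adj u v then c else 0) = (G.degree u : ℝ) * c := by
  rw [← Finset.sum_filter]
  have : Finset.univ.filter (fun v => G.Adj u v) = G.neighborFinset u := by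
    ext v; simp [SimpleGraph.mem_neighborFinset]
  rw [this, Finset.sum_const, SimpleGraph.card_neighborFinset_eq_degree, nsmul_eq_mul]

lemma dirichlet_bound (G : SimpleGraph V) [DecidableRel G.Adj] {β : ℝ} (hβ : 0 ≤ β)
    {d j : ℕ} (hd : ∀ v, G.degree v ≤ d) {f : (V → Bool) → ℝ}
    (hf : ∀ y, countB y ≠ j → f y = 0) :
    ∑ x : V → Bool, f x * negGen G β f x
      ≤ 2 * β * j * d * ∑ x : V → Bool, f x ^ 2 := by
  classical
  set inner : V → V → ℝ :=
    fun u v => ∑ x : V → Bool, (if G.Adj u v ∧ x u ≠ x v then f x ^ 2 else 0) with hinner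
  have hinner_nonneg : ∀ u v, 0 ≤ inner u v := by
    intro u v
    apply Finset.sum_nonneg; intro x _
    split_ifs
    · exact sq_nonneg _
    · exact le_refl 0
  have step2 : ∀ u v : V,
      (if G.Adj u v then ∑ x : V → Bool, (f x - f (swapAt x u v)) ^ 2 else 0)
        ≤ 4 * inner u v := by
    intro u v
    split_ifs with hA
    · have hne : u ≠ v := G.ne_of_adj hA
      have e0 : ∀ x : V → Bool, (f x - f (swapAt x u v)) ^ 2
          = (if x u ≠ x v then (f x - f (swapAt x u v)) ^ 2 else 0) := by
        intro x
        split_ifs with h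
        · rfl
        · rw [swapAt_eq_self (not_ne_iff.mp h), sub_self]
          norm_num
      have e1 : ∀ x : V → Bool, (if x u ≠ x v then (f x - f (swapAt x u v)) ^ 2 else 0)
          ≤ (if x u ≠ x v then 2 * f x ^ 2 + 2 * f (swapAt x u v) ^ 2 else 0) := by
        intro x
        split_ifs
        · nlinarith [sq_nonneg (f x + f (swapAt x u v))]
        · exact le_refl 0
      have e2 : ∑ x : V → Bool, (if x u ≠ x v then 2 * f (swapAt x u v) ^ 2 else 0)
          = ∑ x : V → Bool, (if x u ≠ x v then 2 * f x ^ 2 else 0) := by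
        have := sum_swapAt_reindex u v (fun y => if y u ≠ y v then 2 * f y ^ 2 else 0)
        rw [← this]
        apply Finset.sum_congr rfl; intro x _
        have h1 : swapAt x u v u = x v := by simp [swapAt]
        have h2 : swapAt x u v v = x u := by simp [swapAt, hne.symm]
        rw [h1, h2]
        congr 1
        simp [ne_comm]
      calc ∑ x : V → Bool, (f x - f (swapAt x u v)) ^ 2
          = ∑ x : V → Bool, (if x u ≠ x v then (f x - f (swapAt x u v)) ^ 2 else 0) :=
            Finset.sum_congr rfl (fun x _ => e0 x)
        _ ≤ ∑ x : V → Bool, (if x u ≠ x v then 2 * f x ^ 2 + 2 * f (swapAt x u v) ^ 2 else 0) :=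
            Finset.sum_le_sum (fun x _ => e1 x)
        _ = ∑ x : V → Bool, ((if x u ≠ x v then 2 * f x ^ 2 else 0)
              + (if x u ≠ x v then 2 * f (swapAt x u v) ^ 2 else 0)) := by
            apply Finset.sum_congr rfl; intro x _
            split_ifs <;> ring
        _ = ∑ x : V → Bool, (if x u ≠ x v then 2 * f x ^ 2 else 0)
              + ∑ x : V → Bool, (if x u ≠ x v then 2 * f (swapAt x u v) ^ 2 else 0) :=
            Finset.sum_add_distrib
        _ = 4 * inner u v := by
            rw [e2, hinner]
            simp only [hA, true_and]
            rw [← Finset.sum_add_distrib, Finset.mul_sum]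
            apply Finset.sum_congr rfl; intro x _
            split_ifs <;> ring
    · exact mul_nonneg (by norm_num) (hinner_nonneg u v)
  have pointwise : ∀ x : V → Bool,
      ∑ u : V, ∑ v : V, (if G.Adj u v ∧ x u ≠ x v then f x ^ 2 else 0)
        ≤ 2 * j * d * f x ^ 2 := by
    intro x
    have split : ∀ u v : V, (if G.Adj u v ∧ x u ≠ x v then f x ^ 2 else 0)
        ≤ (if G.Adj u v ∧ x u = true then f x ^ 2 else 0)
          + (if G.Adj u v ∧ x v = true then f x ^ 2 else 0) := by
      intro u v
      by_cases h : G.Adj u v ∧ x u ≠ x v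
      · rw [if_pos h]
        rcases h with ⟨hA, hne⟩
        by_cases hxu : x u = true
        · rw [if_pos ⟨hA, hxu⟩]
          have : (0:ℝ) ≤ (if G.Adj u v ∧ x v = true then f x ^ 2 else 0) := by
            split_ifs
            · exact sq_nonneg _
            · exact le_refl 0
          linarith
        · have hxu' : x u = false := by
            cases hxuu : x u
            · rfl
            · exact absurd hxuu hxu
          have hxv : x v = true := by
            cases hxv : x v
            · exact absurd (hxu'.trans hxv.symm) hne
            · rfl
          rw [if_neg (fun hc => hxu hc.2), if_pos ⟨hA, hxv⟩]
          have : (0:ℝ) ≤ (if G.Adj u v ∧ x u = true then f x ^ 2 else 0) := by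
            split_ifs
            · exact sq_nonneg _
            · exact le_refl 0
          linarith
      · rw [if_neg h]
        have h1 : (0:ℝ) ≤ (if G.Adj u v ∧ x u = true then f x ^ 2 else 0) := by
          split_ifs
          · exact sq_nonneg _
          · exact le_refl 0
        have h2 : (0:ℝ) ≤ (if G.Adj u v ∧ x v = true then f x ^ 2 else 0) := by
          split_ifs
          · exact sq_nonneg _
          · exact le_refl 0
        linarith
    have half1 : ∑ u : V, ∑ v : V, (if G.Adj u v ∧ x u = true then f x ^ 2 else 0)
        ≤ (j : ℝ) * d * f x ^ 2 := by
      by_cases hx : countB x = j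
      · have e : ∀ u : V, ∑ v : V, (if G.Adj u v ∧ x u = true then f x ^ 2 else 0)
            = (if x u = true then (G.degree u : ℝ) * f x ^ 2 else 0) := by
          intro u
          by_cases hxu : x u = true
          · rw [if_pos hxu, ← degree_sum_ite G u (f x ^ 2)]
            apply Finset.sum_congr rfl; intro v _
            simp [hxu]
          · rw [if_neg hxu]
            apply Finset.sum_eq_zero; intro v _
            simp [hxu]
        rw [Finset.sum_congr rfl (fun u _ => e u)]
        have e2 : ∀ u : V, (if x u = true then (G.degree u : ℝ) * f x ^ 2 else 0)
            ≤ (if x u = true then (d : ℝ) * f x ^ 2 else 0) := by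
          intro u
          split_ifs
          · exact mul_le_mul_of_nonneg_right (by exact_mod_cast hd u) (sq_nonneg _)
          · exact le_refl 0
        calc ∑ u : V, (if x u = true then (G.degree u : ℝ) * f x ^ 2 else 0)
            ≤ ∑ u : V, (if x u = true then (d : ℝ) * f x ^ 2 else 0) :=
              Finset.sum_le_sum (fun u _ => e2 u)
          _ = (countB x : ℝ) * ((d : ℝ) * f x ^ 2) := by
              rw [← Finset.sum_filter, Finset.sum_const, nsmul_eq_mul]
              rfl
          _ = (j : ℝ) * d * f x ^ 2 := by rw [hx]; ring
      · have hfx : f x = 0 := hf x hx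
        have : ∀ u : V, ∑ v : V, (if G.Adj u v ∧ x u = true then f x ^ 2 else 0) = 0 := by
          intro u
          apply Finset.sum_eq_zero; intro v _
          split_ifs <;> simp [hfx]
        rw [Finset.sum_congr rfl (fun u _ => this u)]
        simp [hfx]
    have half2 : ∑ u : V, ∑ v : V, (if G.Adj u v ∧ x v = true then f x ^ 2 else 0)
        ≤ (j : ℝ) * d * f x ^ 2 := by
      rw [Finset.sum_comm]
      calc ∑ v : V, ∑ u : V, (if G.Adj u v ∧ x v = true then f x ^ 2 else 0)
          = ∑ v : V, ∑ u : V, (if G.Adj v u ∧ x v = true then f x ^ 2 else 0) := by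
            apply Finset.sum_congr rfl; intro v _
            apply Finset.sum_congr rfl; intro u _
            exact if_congr (and_congr_left' (G.adj_comm u v)) rfl rfl
        _ ≤ (j : ℝ) * d * f x ^ 2 := half1
    calc ∑ u : V, ∑ v : V, (if G.Adj u v ∧ x u ≠ x v then f x ^ 2 else 0)
        ≤ ∑ u : V, ∑ v : V, ((if G.Adj u v ∧ x u = true then f x ^ 2 else 0)
            + (if G.Adj u v ∧ x v = true then f x ^ 2 else 0)) := by
          apply Finset.sum_le_sum; intro u _
          apply Finset.sum_le_sum; intro v _
          exact split u v
      _ = ∑ u : V, ∑ v : V, (if G.Adj u v ∧ x u = true then f x ^ 2 else 0)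
            + ∑ u : V, ∑ v : V, (if G.Adj u v ∧ x v = true then f x ^ 2 else 0) := by
          rw [← Finset.sum_add_distrib]
          apply Finset.sum_congr rfl; intro u _
          exact Finset.sum_add_distrib
      _ ≤ (j : ℝ) * d * f x ^ 2 + (j : ℝ) * d * f x ^ 2 := add_le_add half1 half2
      _ = 2 * j * d * f x ^ 2 := by ring
  rw [dirichlet_form]
  calc (β / 4) * ∑ u : V, ∑ v : V,
        (if G.Adj u v then ∑ x : V → Bool, (f x - f (swapAt x u v)) ^ 2 else 0)
      ≤ (β / 4) * ∑ u : V, ∑ v : V, 4 * inner u v := by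
        apply mul_le_mul_of_nonneg_left _ (by linarith)
        apply Finset.sum_le_sum; intro u _
        apply Finset.sum_le_sum; intro v _
        exact step2 u v
    _ = β * ∑ u : V, ∑ v : V, inner u v := by
        rw [Finset.mul_sum, Finset.mul_sum]
        apply Finset.sum_congr rfl; intro u _
        rw [Finset.mul_sum, Finset.mul_sum]
        apply Finset.sum_congr rfl; intro v _
        ring
    _ = β * ∑ x : V → Bool, ∑ u : V, ∑ v : V,
          (if G.Adj u v ∧ x u ≠ x v then f x ^ 2 else 0) := by
        congr 1
        rw [hinner]
        rw [Finset.sum_congr rfl (fun u (_ : u ∈ Finset.univ) => Finset.sum_comm)]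
        exact Finset.sum_comm
    _ ≤ β * ∑ x : V → Bool, 2 * j * d * f x ^ 2 := by
        apply mul_le_mul_of_nonneg_left _ hβ
        exact Finset.sum_le_sum (fun x _ => pointwise x)
    _ = 2 * β * j * d * ∑ x : V → Bool, f x ^ 2 := by
        rw [Finset.mul_sum, Finset.mul_sum]
        apply Finset.sum_congr rfl; intro x _
        ring
lemma negGen_add_smul (G : SimpleGraph V) [DecidableRel G.Adj] (β : ℝ) (g h : (V → Bool) → ℝ)
    (t : ℝ) (x : V → Bool) :
    negGen G β (fun y => g y + t * h y) x = negGen G β g x + t * negGen G β h x := by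
  simp only [negGen]
  have e : ∀ u v : V,
      (if G.Adj u v then (g x + t * h x) - (g (swapAt x u v) + t * h (swapAt x u v)) else 0)
        = (if G.Adj u v then g x - g (swapAt x u v) else 0)
          + t * (if G.Adj u v then h x - h (swapAt x u v) else 0) := by
    intro u v; split_ifs <;> ring
  calc (β/2) * ∑ u : V, ∑ v : V,
        (if G.Adj u v then (g x + t * h x) - (g (swapAt x u v) + t * h (swapAt x u v)) else 0)
      = (β/2) * ∑ u : V, ((∑ v : V, (if G.Adj u v then g x - g (swapAt x u v) else 0))
          + t * ∑ v : V, (if G.Adj u v then h x - h (swapAt x u v) else 0)) := by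
        congr 1
        apply Finset.sum_congr rfl; intro u _
        rw [Finset.sum_congr rfl (fun v _ => e u v), Finset.sum_add_distrib, ← Finset.mul_sum]
    _ = (β/2) * ((∑ u : V, ∑ v : V, (if G.Adj u v then g x - g (swapAt x u v) else 0))
          + t * ∑ u : V, ∑ v : V, (if G.Adj u v then h x - h (swapAt x u v) else 0)) := by
        rw [Finset.sum_add_distrib, ← Finset.mul_sum]
    _ = _ := by ring

lemma negGen_CS (G : SimpleGraph V) [DecidableRel G.Adj] {β : ℝ} (hβ : 0 ≤ β)
    (g h : (V → Bool) → ℝ) :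
    (∑ x : V → Bool, g x * negGen G β h x) ^ 2
      ≤ (∑ x : V → Bool, g x * negGen G β g x) * (∑ x : V → Bool, h x * negGen G β h x) := by
  have hsymm : ∑ x : V → Bool, h x * negGen G β g x = ∑ x : V → Bool, g x * negGen G β h x := by
    rw [← negGen_symm]
    apply Finset.sum_congr rfl; intro x _; ring
  have key : ∀ t : ℝ, 0 ≤ (∑ x : V → Bool, h x * negGen G β h x) * (t * t)
      + (2 * ∑ x : V → Bool, g x * negGen G β h x) * t
      + (∑ x : V → Bool, g x * negGen G β g x) := by
    intro t
    have h0 : 0 ≤ ∑ x : V → Bool, (g x + t * h x) * negGen G β (fun y => g y + t * h y) x :=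
      dirichlet_nonneg G hβ _
    have expand : ∑ x : V → Bool, (g x + t * h x) * negGen G β (fun y => g y + t * h y) x
        = (∑ x : V → Bool, h x * negGen G β h x) * (t * t)
          + (2 * ∑ x : V → Bool, g x * negGen G β h x) * t
          + (∑ x : V → Bool, g x * negGen G β g x) := by
      rw [Finset.sum_congr rfl (fun x (_ : x ∈ Finset.univ) => by
        rw [negGen_add_smul G β g h t x])]
      have : ∀ x : V → Bool, (g x + t * h x) * (negGen G β g x + t * negGen G β h x)
          = g x * negGen G β g x + t * (g x * negGen G β h x)
            + t * (h x * negGen G β g x) + t^2 * (h x * negGen G β h x) := by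
        intro x; ring
      rw [Finset.sum_congr rfl (fun x (_ : x ∈ Finset.univ) => this x)]
      rw [Finset.sum_add_distrib, Finset.sum_add_distrib, Finset.sum_add_distrib,
        ← Finset.mul_sum, ← Finset.mul_sum, ← Finset.mul_sum, hsymm]
      ring
    linarith [expand ▸ h0]
  have hd := discrim_le_zero key
  rw [discrim] at hd
  nlinarith [hd]

lemma negGen_sq_bound (G : SimpleGraph V) [DecidableRel G.Adj] {β : ℝ} (hβ : 0 ≤ β)
    {d j : ℕ} (hd : ∀ v, G.degree v ≤ d) {f : (V → Bool) → ℝ}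
    (hf : ∀ y, countB y ≠ j → f y = 0) :
    ∑ x : V → Bool, (negGen G β f x) ^ 2
      ≤ (2 * β * j * d) ^ 2 * ∑ x : V → Bool, f x ^ 2 := by
  set c : ℝ := 2 * β * (j : ℝ) * (d : ℝ) with hc
  have hc0 : 0 ≤ c := by positivity
  have hTf_supp : ∀ y, countB y ≠ j → negGen G β f y = 0 := fun y hy => negGen_support G β hf hy
  have h1 : ∑ x : V → Bool, (negGen G β f x) ^ 2
      = ∑ x : V → Bool, (negGen G β f) x * negGen G β f x := by
    apply Finset.sum_congr rfl; intro x _; ring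
  have h2 := negGen_CS G hβ (negGen G β f) f
  have h3 : ∑ x : V → Bool, (negGen G β f) x * negGen G β (negGen G β f) x
      ≤ c * ∑ x : V → Bool, (negGen G β f x) ^ 2 := dirichlet_bound G hβ hd hTf_supp
  have h4 : ∑ x : V → Bool, f x * negGen G β f x ≤ c * ∑ x : V → Bool, f x ^ 2 :=
    dirichlet_bound G hβ hd hf
  have h5 : 0 ≤ ∑ x : V → Bool, f x ^ 2 := Finset.sum_nonneg (fun x _ => sq_nonneg _)
  have h6 : 0 ≤ ∑ x : V → Bool, (negGen G β f x) ^ 2 :=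
    Finset.sum_nonneg (fun x _ => sq_nonneg _)
  have h7 : 0 ≤ ∑ x : V → Bool, f x * negGen G β f x := dirichlet_nonneg G hβ f
  have h8 : 0 ≤ ∑ x : V → Bool, (negGen G β f) x * negGen G β (negGen G β f) x :=
    dirichlet_nonneg G hβ _
  set S := ∑ x : V → Bool, (negGen G β f x) ^ 2 with hS
  set N := ∑ x : V → Bool, f x ^ 2 with hN
  rw [← h1] at h2
  have h9 : S ^ 2 ≤ (c * S) * (c * N) := by
    calc S ^ 2 ≤ (∑ x : V → Bool, (negGen G β f) x * negGen G β (negGen G β f) x)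
        * (∑ x : V → Bool, f x * negGen G β f x) := h2
      _ ≤ (c * S) * (c * N) := by
        apply mul_le_mul h3 h4 h7 (by positivity)
  rcases eq_or_lt_of_le h6 with hz | hpos
  · rw [← hz]
    positivity
  · nlinarith [h9, hpos]
lemma negGen_zero (G : SimpleGraph V) [DecidableRel G.Adj] (β : ℝ) (x : V → Bool) :
    negGen G β (fun _ => (0:ℝ)) x = 0 := by
  simp [negGen]

lemma negGen_smul (G : SimpleGraph V) [DecidableRel G.Adj] (β a : ℝ) (f : (V → Bool) → ℝ)
    (x : V → Bool) : negGen G β (fun y => a * f y) x = a * negGen G β f x := by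
  have := negGen_add_smul G β (fun _ => 0) f a x
  simpa [negGen_zero] using this

lemma plusOp_smul (a : ℝ) (f : (V → Bool) → ℝ) (x : V → Bool) :
    plusOp (fun y => a * f y) x = a * plusOp f x := by
  rw [plusOp, plusOp, Finset.mul_sum]

lemma minusOp_smul (a : ℝ) (f : (V → Bool) → ℝ) (x : V → Bool) :
    minusOp (fun y => a * f y) x = a * minusOp f x := by
  rw [minusOp, minusOp, Finset.mul_sum]

lemma plusOp_congr {f g : (V → Bool) → ℝ} (h : ∀ y, f y = g y) (x : V → Bool) :
    plusOp f x = plusOp g x :=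
  Finset.sum_congr rfl (fun v _ => h _)

lemma eigen_everywhere (G : SimpleGraph V) [DecidableRel G.Adj] (β lam : ℝ)
    {f : (V → Bool) → ℝ} {j : ℕ} (hf : ∀ y, countB y ≠ j → f y = 0)
    (heig : ∀ x, countB x = j → negGen G β f x = lam * f x) :
    ∀ x, negGen G β f x = lam * f x := by
  intro x
  by_cases hx : countB x = j
  · exact heig x hx
  · rw [negGen_support G β hf hx, hf x hx, mul_zero]

/-- The descent lemma on the complete graph: an eigenfunction at level `j0 + m` whose
eigenvalue is below all levels `j0 < j ≤ j0 + m` is an `m`-fold lift from level `j0`. -/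
lemma descent {α lam : ℝ} (hα : 0 < α) :
    ∀ (m j0 : ℕ) (f : (V → Bool) → ℝ),
      (∀ y, countB y ≠ j0 + m → f y = 0) →
      (∀ x, negGen (⊤ : SimpleGraph V) α f x = lam * f x) →
      (∀ j : ℕ, j0 < j → j ≤ j0 + m →
        lam < α * ((j : ℝ) * ((Fintype.card V : ℝ) - (j : ℝ) + 1))) →
      ∃ φ : (V → Bool) → ℝ, (∀ y, countB y ≠ j0 → φ y = 0)
        ∧ (∀ x, negGen (⊤ : SimpleGraph V) α φ x = lam * φ x)
        ∧ ∀ x, f x = minusOp^[m] φ x := by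
  intro m
  induction m with
  | zero => exact fun j0 f h1 h2 _ => ⟨f, h1, h2, fun x => rfl⟩
  | succ m ih =>
    intro j0 f hsupp heig hlt
    set j : ℕ := j0 + (m + 1) with hj
    set c : ℝ := α * ((j : ℝ) * ((Fintype.card V : ℝ) - (j : ℝ) + 1)) - lam with hcdef
    have hc : 0 < c := by
      have := hlt j (by omega) (le_refl _)
      rw [hcdef]
      linarith
    have hAB : ∀ x, α * minusOp (plusOp f) x = c * f x := by
      intro x
      have hid := negGen_top_eq α f x
      rw [heig x] at hid
      by_cases hx : countB x = j
      · rw [hx] at hid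
        rw [hcdef]
        linear_combination hid
      · have hfx : f x = 0 := hsupp x hx
        have hps : ∀ y, countB y ≠ j0 + m → plusOp f y = 0 := by
          intro y hy
          exact plusOp_support (j := j0 + m) (fun z hz => hsupp z hz) hy
        have hAB0 : minusOp (plusOp f) x = 0 :=
          minusOp_support (j := j0 + m) hps hx
        rw [hfx, hAB0]
        ring
    set g : (V → Bool) → ℝ := fun y => (α / c) * plusOp f y with hg
    have hgsupp : ∀ y, countB y ≠ j0 + m → g y = 0 := by
      intro y hy
      rw [hg]
      simp only
      rw [plusOp_support (j := j0 + m) (fun z hz => hsupp z hz) hy, mul_zero]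
    have hgeig : ∀ x, negGen (⊤ : SimpleGraph V) α g x = lam * g x := by
      intro x
      rw [hg]
      simp only
      rw [negGen_smul, negGen_plusOp_comm, plusOp_congr heig x, plusOp_smul]
      ring
    have hfg : ∀ x, f x = minusOp g x := by
      intro x
      have h1 : minusOp g x = (α / c) * minusOp (plusOp f) x := minusOp_smul _ _ _
      have h2 := hAB x
      rw [h1, div_mul_eq_mul_div, h2, mul_comm c (f x), mul_div_assoc, div_self hc.ne', mul_one]
    obtain ⟨φ, hφ1, hφ2, hφ3⟩ := ih j0 g hgsupp hgeig
      (fun j' h1 h2 => hlt j' h1 (by omega))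
    refine ⟨φ, hφ1, hφ2, fun x => ?_⟩
    rw [Function.iterate_succ_apply']
    rw [hfg x]
    exact Finset.sum_congr rfl (fun w _ => by rw [hφ3])
lemma iter_supp (G : SimpleGraph V) [DecidableRel G.Adj] (β : ℝ) {f : (V → Bool) → ℝ} {j : ℕ}
    (hf : ∀ y, countB y ≠ j → f y = 0) :
    ∀ N y, countB y ≠ j → (fun g => negGen G β g)^[N] f y = 0 := by
  intro N
  induction N with
  | zero => exact hf
  | succ N ih =>
    intro y hy
    rw [Function.iterate_succ_apply']
    exact negGen_support G β ih hy

lemma iter_eigen (G : SimpleGraph V) [DecidableRel G.Adj] (β lam : ℝ) {f : (V → Bool) → ℝ}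
    (h : ∀ x, negGen G β f x = lam * f x) :
    ∀ N x, (fun g => negGen G β g)^[N] f x = lam ^ N * f x := by
  intro N
  induction N with
  | zero => intro x; simp
  | succ N ih =>
    intro x
    rw [Function.iterate_succ_apply']
    have hfun : (fun g => negGen G β g)^[N] f = fun y => lam ^ N * f y := funext ih
    simp only [hfun]
    rw [negGen_smul, h x]
    ring

lemma iter_comm (G : SimpleGraph V) [DecidableRel G.Adj] (β : ℝ) (m : ℕ)
    (f : (V → Bool) → ℝ) :
    ∀ N, (fun g => negGen G β g)^[N] (minusOp^[m] f) = minusOp^[m] ((fun g => negGen G β g)^[N] f) := by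
  have one : ∀ g : (V → Bool) → ℝ, negGen G β (minusOp^[m] g) = minusOp^[m] (negGen G β g) := by
    intro g
    induction m with
    | zero => rfl
    | succ m ihm =>
      rw [Function.iterate_succ_apply', Function.iterate_succ_apply']
      rw [funext (negGen_minusOp_comm G β (minusOp^[m] g)), ihm]
  intro N
  induction N with
  | zero => rfl
  | succ N ih =>
    rw [Function.iterate_succ_apply', Function.iterate_succ_apply', ih, one]

lemma iter_bound (G : SimpleGraph V) [DecidableRel G.Adj] {β : ℝ} (hβ : 0 ≤ β)
    {d j : ℕ} (hd : ∀ v, G.degree v ≤ d) {f : (V → Bool) → ℝ}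
    (hf : ∀ y, countB y ≠ j → f y = 0) :
    ∀ N, ∑ x : V → Bool, ((fun g => negGen G β g)^[N] f x) ^ 2
      ≤ ((2 * β * j * d) ^ 2) ^ N * ∑ x : V → Bool, f x ^ 2 := by
  intro N
  induction N with
  | zero => simp
  | succ N ih =>
    have hsupp := iter_supp G β hf N
    calc ∑ x : V → Bool, ((fun g => negGen G β g)^[N+1] f x) ^ 2
        = ∑ x : V → Bool, (negGen G β ((fun g => negGen G β g)^[N] f) x) ^ 2 := by
          apply Finset.sum_congr rfl; intro x _
          rw [Function.iterate_succ_apply']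
      _ ≤ (2 * β * j * d) ^ 2 * ∑ x : V → Bool, ((fun g => negGen G β g)^[N] f x) ^ 2 :=
          negGen_sq_bound G hβ hd hsupp
      _ ≤ (2 * β * j * d) ^ 2 * (((2 * β * j * d) ^ 2) ^ N * ∑ x : V → Bool, f x ^ 2) :=
          mul_le_mul_of_nonneg_left ih (sq_nonneg _)
      _ = ((2 * β * j * d) ^ 2) ^ (N+1) * ∑ x : V → Bool, f x ^ 2 := by
          rw [pow_succ]; ring

lemma iter_symm (G : SimpleGraph V) [DecidableRel G.Adj] (β : ℝ) (g h : (V → Bool) → ℝ) :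
    ∀ N, ∑ x : V → Bool, (fun g' => negGen G β g')^[N] g x * h x
      = ∑ x : V → Bool, g x * (fun g' => negGen G β g')^[N] h x := by
  intro N
  induction N generalizing g h with
  | zero => rfl
  | succ N ih =>
    calc ∑ x : V → Bool, (fun g' => negGen G β g')^[N+1] g x * h x
        = ∑ x : V → Bool, (fun g' => negGen G β g')^[N] (negGen G β g) x * h x := by
          rw [Function.iterate_succ_apply]
      _ = ∑ x : V → Bool, negGen G β g x * (fun g' => negGen G β g')^[N] h x := ih _ _
      _ = ∑ x : V → Bool, g x * negGen G β ((fun g' => negGen G β g')^[N] h) x :=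
          negGen_symm G β g _
      _ = ∑ x : V → Bool, g x * (fun g' => negGen G β g')^[N+1] h x := by
          apply Finset.sum_congr rfl; intro x _
          rw [Function.iterate_succ_apply']

lemma iter_adjoint : ∀ (m : ℕ) (g h : (V → Bool) → ℝ),
    ∑ x : V → Bool, minusOp^[m] g x * h x = ∑ x : V → Bool, g x * plusOp^[m] h x := by
  intro m
  induction m with
  | zero => intro g h; rfl
  | succ m ih =>
    intro g h
    calc ∑ x : V → Bool, minusOp^[m+1] g x * h x
        = ∑ x : V → Bool, minusOp^[m] (minusOp g) x * h x := by
          rw [Function.iterate_succ_apply]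
      _ = ∑ x : V → Bool, minusOp g x * plusOp^[m] h x := ih _ _
      _ = ∑ x : V → Bool, g x * plusOp (plusOp^[m] h) x := minusOp_adjoint _ _
      _ = ∑ x : V → Bool, g x * plusOp^[m+1] h x := by
          apply Finset.sum_congr rfl; intro x _
          rw [Function.iterate_succ_apply']

lemma card_level (j : ℕ) :
    (Finset.univ.filter (fun x : V → Bool => countB x = j)).card = (Fintype.card V).choose j := by
  classical
  rw [← Finset.card_univ, ← Finset.card_powersetCard j (Finset.univ : Finset V)]
  apply Finset.card_nbij (i := fun x => Finset.univ.filter (fun v => x v = true))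
  · intro x hx
    simp only [Finset.coe_filter, Finset.mem_filter, Finset.mem_univ, true_and, Set.mem_setOf_eq] at hx
    rw [Finset.mem_coe, Finset.mem_powersetCard]
    exact ⟨Finset.filter_subset _ _ |>.trans (by simp), hx⟩
  · intro x hx y hy hxy
    simp only [Set.mem_setOf_eq] at *
    funext v
    have := Finset.ext_iff.mp hxy v
    simp only [Finset.mem_filter, Finset.mem_univ, true_and] at this
    cases hxv : x v <;> cases hyv : y v <;> simp_all
  · intro t ht
    simp only [Finset.coe_filter, Finset.mem_coe, Finset.mem_powersetCard, Set.mem_image,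
      Set.mem_setOf_eq] at *
    refine ⟨fun v => decide (v ∈ t), ?_, ?_⟩
    · constructor
      · exact Finset.mem_univ _
      · rw [countB]
        have : Finset.univ.filter (fun v => decide (v ∈ t) = true) = t := by
          ext v; simp
        rw [this]
        exact ht.2
    · ext v; simp

lemma euclid_sum_apply {ι κ : Type*} [Fintype ι] [Fintype κ] (c : κ → ℝ)
    (v : κ → EuclideanSpace ℝ ι) (z : ι) :
    (∑ t, c t • v t) z = ∑ t, c t * v t z := by
  classical
  induction (Finset.univ : Finset κ) using Finset.induction with
  | empty => rfl
  | insert _ _ h ih =>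
    rw [Finset.sum_insert h, Finset.sum_insert h, ← ih]
    rfl


end AuxLemmas

/-- Spectral span containment: low eigenvalue spaces of the complete-graph exclusion
generator (rate α) at level ℓ ≤ ⌊n/2⌋ are contained in the span of eigenvectors of the
generator on G (rate β, maximum degree d) with eigenvalue at most 2βk'd, whenever
αk'(n-k'+1) ≥ k. -/
theorem spectral_span_containment (n : ℕ) (G : SimpleGraph (Fin n)) [DecidableRel G.Adj]
    (d : ℕ) (hd : ∀ v, G.degree v ≤ d)
    (α β : ℝ) (hα : 0 < α) (hβ : 0 < β)
    (ℓ : ℕ) (hℓ : 2 * ℓ ≤ n)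
    (ψ χ : Fin (n.choose ℓ) → (Fin n → Bool) → ℝ)
    (lam mu : Fin (n.choose ℓ) → ℝ)
    (hψsupp : ∀ i x, countB x ≠ ℓ → ψ i x = 0)
    (hχsupp : ∀ i x, countB x ≠ ℓ → χ i x = 0)
    (heigψ : ∀ i x, countB x = ℓ →
      negGen (⊤ : SimpleGraph (Fin n)) α (ψ i) x = lam i * ψ i x)
    (heigχ : ∀ i x, countB x = ℓ → negGen G β (χ i) x = mu i * χ i x)
    (horthψ : ∀ i j, innerL ℓ (ψ i) (ψ j) = if i = j then 1 else 0)
    (horthχ : ∀ i j, innerL ℓ (χ i) (χ j) = if i = j then 1 else 0)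
    (k : ℝ) (hk : 0 < k) (k' : ℕ) (hk'1 : 1 ≤ k')
    (hkk' : k ≤ α * k' * ((n : ℝ) - k' + 1)) :
    Submodule.span ℝ {g | ∃ i, lam i ≤ k ∧ g = ψ i}
      ≤ Submodule.span ℝ {g | ∃ i, mu i ≤ 2 * β * k' * d ∧ g = χ i} := by
  classical
  apply Submodule.span_le.mpr
  rintro g ⟨i, hlami, rfl⟩
  -- setup
  set j0 : ℕ := min k' ℓ with hj0def
  set m : ℕ := ℓ - j0 with hmdef
  have hj0k' : j0 ≤ k' := min_le_left _ _
  have hj0ℓ : j0 ≤ ℓ := min_le_right _ _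
  have hj0m : j0 + m = ℓ := by omega
  -- Q-side: descend ψ i to level j0
  have hψe : ∀ x, negGen (⊤ : SimpleGraph (Fin n)) α (ψ i) x = lam i * ψ i x :=
    eigen_everywhere _ _ _ (hψsupp i) (heigψ i)
  have hsupp' : ∀ y, countB y ≠ j0 + m → ψ i y = 0 := fun y hy => hψsupp i y (hj0m ▸ hy)
  have hlt : ∀ j : ℕ, j0 < j → j ≤ j0 + m →
      lam i < α * ((j : ℝ) * ((Fintype.card (Fin n) : ℝ) - (j : ℝ) + 1)) := by
    intro j hj1 hj2
    rw [Fintype.card_fin]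
    have hk'j : k' < j := by omega
    have hjl : j ≤ ℓ := by omega
    have h1 : (k' : ℝ) < j := by exact_mod_cast hk'j
    have h2 : (j : ℝ) ≤ ℓ := by exact_mod_cast hjl
    have h3 : 2 * (ℓ : ℝ) ≤ n := by exact_mod_cast hℓ
    have h4 : (1 : ℝ) ≤ k' := by exact_mod_cast hk'1
    have key : α * (k' : ℝ) * ((n : ℝ) - k' + 1) < α * ((j : ℝ) * ((n : ℝ) - j + 1)) := by
      nlinarith [hα, mul_pos hα (sub_pos.mpr h1)]
    linarith
  obtain ⟨φ, hφsupp, hφeig, hφeq⟩ := descent hα m j0 (ψ i) hsupp' hψe hlt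
  -- coefficients against χ t vanish for large eigenvalues
  have htc0 : (0:ℝ) ≤ 2 * β * (k' : ℝ) * d := by positivity
  have hcoef0 : ∀ t : Fin (n.choose ℓ), ¬ (mu t ≤ 2 * β * (k':ℝ) * d) →
      ∑ x : Fin n → Bool, χ t x * ψ i x = 0 := by
    intro t hmut
    push_neg at hmut
    have hχe : ∀ x, negGen G β (χ t) x = mu t * χ t x :=
      eigen_everywhere _ _ _ (hχsupp t) (heigχ t)
    have hμpos : 0 < mu t := lt_of_le_of_lt htc0 hmut
    have hc2μ : (2 * β * (j0:ℝ) * d) ^ 2 < (mu t) ^ 2 := by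
      have hcb0 : (0:ℝ) ≤ 2 * β * (j0:ℝ) * d := by positivity
      have hcble : 2 * β * (j0:ℝ) * d ≤ 2 * β * (k':ℝ) * d := by
        have : (j0:ℝ) ≤ (k':ℝ) := by exact_mod_cast hj0k'
        nlinarith [mul_nonneg (mul_nonneg hβ.le (sub_nonneg.mpr this)) (Nat.cast_nonneg d : (0:ℝ) ≤ d)]
      nlinarith
    set K : ℝ := (∑ x : Fin n → Bool, φ x ^ 2)
      * (∑ x : Fin n → Bool, plusOp^[m] (χ t) x ^ 2) with hKdef
    have hK0 : 0 ≤ K := by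
      apply mul_nonneg <;> exact Finset.sum_nonneg (fun x _ => sq_nonneg _)
    have key : ∀ N : ℕ, ((mu t) ^ 2) ^ N * (∑ x : Fin n → Bool, χ t x * ψ i x) ^ 2
        ≤ ((2 * β * (j0:ℝ) * d) ^ 2) ^ N * K := by
      intro N
      have e1 : ∑ x : Fin n → Bool, χ t x * (fun g => negGen G β g)^[N] (ψ i) x
          = (mu t) ^ N * ∑ x : Fin n → Bool, χ t x * ψ i x := by
        rw [← iter_symm G β (χ t) (ψ i) N]
        rw [Finset.sum_congr rfl (fun x (_ : x ∈ Finset.univ) => by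
          rw [iter_eigen G β (mu t) hχe N x])]
        rw [Finset.mul_sum]
        apply Finset.sum_congr rfl; intro x _; ring
      have hcomm : (fun g => negGen G β g)^[N] (ψ i)
          = minusOp^[m] ((fun g => negGen G β g)^[N] φ) := by
        rw [funext hφeq]
        exact iter_comm G β m φ N
      have e2 : ∑ x : Fin n → Bool, χ t x * (fun g => negGen G β g)^[N] (ψ i) x
          = ∑ x : Fin n → Bool, (fun g => negGen G β g)^[N] φ x * plusOp^[m] (χ t) x := by
        rw [hcomm]
        rw [show ∑ x : Fin n → Bool, χ t x * minusOp^[m] ((fun g => negGen G β g)^[N] φ) x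
          = ∑ x : Fin n → Bool, minusOp^[m] ((fun g => negGen G β g)^[N] φ) x * χ t x from
          Finset.sum_congr rfl (fun x _ => mul_comm _ _)]
        exact iter_adjoint m _ (χ t)
      have e3 : (∑ x : Fin n → Bool, (fun g => negGen G β g)^[N] φ x * plusOp^[m] (χ t) x) ^ 2
          ≤ (∑ x : Fin n → Bool, ((fun g => negGen G β g)^[N] φ x) ^ 2)
            * (∑ x : Fin n → Bool, plusOp^[m] (χ t) x ^ 2) :=
        Finset.sum_mul_sq_le_sq_mul_sq _ _ _
      have e4 := iter_bound G hβ.le hd hφsupp N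
      have e5 : 0 ≤ ∑ x : Fin n → Bool, plusOp^[m] (χ t) x ^ 2 :=
        Finset.sum_nonneg (fun x _ => sq_nonneg _)
      calc ((mu t) ^ 2) ^ N * (∑ x : Fin n → Bool, χ t x * ψ i x) ^ 2
          = ((mu t) ^ N * ∑ x : Fin n → Bool, χ t x * ψ i x) ^ 2 := by
            rw [mul_pow, ← pow_mul, ← pow_mul, Nat.mul_comm]
        _ = (∑ x : Fin n → Bool, (fun g => negGen G β g)^[N] φ x * plusOp^[m] (χ t) x) ^ 2 := by
            rw [← e1, e2]
        _ ≤ (∑ x : Fin n → Bool, ((fun g => negGen G β g)^[N] φ x) ^ 2)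
              * (∑ x : Fin n → Bool, plusOp^[m] (χ t) x ^ 2) := e3
        _ ≤ (((2 * β * (j0:ℝ) * d) ^ 2) ^ N * ∑ x : Fin n → Bool, φ x ^ 2)
              * (∑ x : Fin n → Bool, plusOp^[m] (χ t) x ^ 2) :=
            mul_le_mul_of_nonneg_right e4 e5
        _ = ((2 * β * (j0:ℝ) * d) ^ 2) ^ N * K := by rw [hKdef]; ring
    -- pass to the limit
    set r : ℝ := (2 * β * (j0:ℝ) * d) ^ 2 / (mu t) ^ 2 with hrdef
    have hr0 : 0 ≤ r := by positivity
    have hr1 : r < 1 := by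
      rw [hrdef, div_lt_one (by positivity)]
      exact hc2μ
    have hbound : ∀ N : ℕ, (∑ x : Fin n → Bool, χ t x * ψ i x) ^ 2 ≤ K * r ^ N := by
      intro N
      have hp : (0:ℝ) < ((mu t) ^ 2) ^ N := by positivity
      rw [hrdef, div_pow, ← mul_div_assoc, le_div_iff₀ hp]
      calc (∑ x : Fin n → Bool, χ t x * ψ i x) ^ 2 * ((mu t) ^ 2) ^ N
          = ((mu t) ^ 2) ^ N * (∑ x : Fin n → Bool, χ t x * ψ i x) ^ 2 := by ring
        _ ≤ ((2 * β * (j0:ℝ) * d) ^ 2) ^ N * K := key N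
        _ = K * ((2 * β * (j0:ℝ) * d) ^ 2) ^ N := by ring
    have htend : Filter.Tendsto (fun N : ℕ => K * r ^ N) Filter.atTop (nhds 0) := by
      have := (tendsto_pow_atTop_nhds_zero_of_lt_one hr0 hr1).const_mul K
      simpa using this
    have hle0 : (∑ x : Fin n → Bool, χ t x * ψ i x) ^ 2 ≤ 0 :=
      ge_of_tendsto' htend hbound
    have := sq_nonneg (∑ x : Fin n → Bool, χ t x * ψ i x)
    have hsq0 : (∑ x : Fin n → Bool, χ t x * ψ i x) ^ 2 = 0 := le_antisymm hle0 this
    rw [pow_two] at hsq0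
    exact mul_self_eq_zero.mp hsq0
  -- expansion of ψ i in the χ basis
  set S : Finset (Fin n → Bool) := Finset.univ.filter (fun x => countB x = ℓ) with hSdef
  have hScard : S.card = n.choose ℓ := by
    have := card_level (V := Fin n) ℓ
    rwa [Fintype.card_fin] at this
  have hchoose_pos : 0 < n.choose ℓ := Nat.choose_pos (by omega)
  have hcN0 : (0:ℝ) < (n.choose ℓ : ℝ) := by exact_mod_cast hchoose_pos
  set sqc : ℝ := Real.sqrt (n.choose ℓ : ℝ) with hsqcdef
  have hsq : sqc * sqc = (n.choose ℓ : ℝ) := Real.mul_self_sqrt hcN0.le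
  have hsqpos : 0 < sqc := Real.sqrt_pos.mpr hcN0
  set u : Fin (n.choose ℓ) → EuclideanSpace ℝ {x // x ∈ S} :=
    fun t => WithLp.toLp 2 (fun z : {x // x ∈ S} => sqc⁻¹ * χ t z.1) with hu
  have hinner : ∀ s t : Fin (n.choose ℓ),
      (inner ℝ (u s) (u t) : ℝ) = ((n.choose ℓ : ℝ))⁻¹ * ∑ x ∈ S, χ s x * χ t x := by
    intro s t
    simp only [hu, PiLp.inner_apply, RCLike.inner_apply, conj_trivial]
    have e : ∀ z : {x // x ∈ S}, (sqc⁻¹ * χ s z.1) * (sqc⁻¹ * χ t z.1)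
        = sqc⁻¹ * sqc⁻¹ * (χ s z.1 * χ t z.1) := fun z => by ring
    rw [Finset.sum_congr rfl (fun z _ => mul_comm _ _)]
    rw [Finset.sum_congr rfl (fun z _ => e z), ← Finset.mul_sum]
    rw [Finset.sum_coe_sort S (fun x => χ s x * χ t x)]
    rw [← mul_inv, hsq]
  have horth : Orthonormal ℝ u := by
    rw [orthonormal_iff_ite]
    intro s t
    rw [hinner s t]
    have := horthχ s t
    rw [innerL, Fintype.card_fin] at this
    exact this
  have : Nonempty (Fin (n.choose ℓ)) := ⟨⟨0, hchoose_pos⟩⟩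
  have hfinrank : Fintype.card (Fin (n.choose ℓ))
      = Module.finrank ℝ (EuclideanSpace ℝ {x // x ∈ S}) := by
    rw [finrank_euclideanSpace, Fintype.card_fin, Fintype.card_coe, hScard]
  set B := basisOfLinearIndependentOfCardEqFinrank horth.linearIndependent hfinrank with hB
  have hBu : ⇑B = u := coe_basisOfLinearIndependentOfCardEqFinrank _ _
  have hspan : Submodule.span ℝ (Set.range u) = ⊤ := by
    rw [← hBu]; exact B.span_eq
  set ψres : EuclideanSpace ℝ {x // x ∈ S} := WithLp.toLp 2 (fun z : {x // x ∈ S} => ψ i z.1) with hψres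
  have hmem : ψres ∈ Submodule.span ℝ (Set.range u) := by rw [hspan]; trivial
  obtain ⟨a, ha⟩ := (Submodule.mem_span_range_iff_exists_fun ℝ).mp hmem
  have hacoef : ∀ t, ¬ (mu t ≤ 2 * β * (k':ℝ) * d) → a t = 0 := by
    intro t hmut
    have h1 : (inner ℝ (u t) ψres : ℝ) = a t := by
      rw [← ha, inner_sum]
      rw [Finset.sum_congr rfl (fun s (_ : s ∈ Finset.univ) =>
        real_inner_smul_right (u t) (u s) (a s))]
      rw [Finset.sum_congr rfl (fun s (_ : s ∈ Finset.univ) => by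
        rw [orthonormal_iff_ite.mp horth t s])]
      simp
    have h2 : (inner ℝ (u t) ψres : ℝ) = sqc⁻¹ * ∑ x : Fin n → Bool, χ t x * ψ i x := by
      simp only [hu, hψres, PiLp.inner_apply, RCLike.inner_apply, conj_trivial]
      have e : ∀ z : {x // x ∈ S}, (sqc⁻¹ * χ t z.1) * ψ i z.1
          = sqc⁻¹ * (χ t z.1 * ψ i z.1) := fun z => by ring
      rw [Finset.sum_congr rfl (fun z _ => mul_comm _ _)]
      rw [Finset.sum_congr rfl (fun z _ => e z), ← Finset.mul_sum,
        Finset.sum_coe_sort S (fun x => χ t x * ψ i x)]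
      congr 1
      apply Finset.sum_subset (Finset.subset_univ S)
      intro x _ hx
      have hxl : countB x ≠ ℓ := by
        intro hc
        exact hx (by rw [hSdef]; simp [hc])
      rw [hψsupp i x hxl, mul_zero]
    rw [← h1, h2, hcoef0 t hmut, mul_zero]
  have hrepr : ∀ x, ψ i x = ∑ t : Fin (n.choose ℓ), (a t * sqc⁻¹) * χ t x := by
    intro x
    by_cases hx : countB x = ℓ
    · have hmemx : x ∈ S := by rw [hSdef]; simp [hx]
      have hz : ∑ t : Fin (n.choose ℓ), a t * u t ⟨x, hmemx⟩ = ψ i x := by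
        rw [← euclid_sum_apply a u ⟨x, hmemx⟩, ha]
      rw [← hz]
      apply Finset.sum_congr rfl; intro t _
      rw [hu]
      ring
    · rw [hψsupp i x hx]
      symm
      apply Finset.sum_eq_zero; intro t _
      rw [hχsupp t x hx, mul_zero]
  have hfun : ψ i = ∑ t : Fin (n.choose ℓ), (a t * sqc⁻¹) • χ t := by
    funext x
    rw [hrepr x, Finset.sum_apply]
    apply Finset.sum_congr rfl; intro t _
    simp [smul_eq_mul]
  rw [hfun]
  apply Submodule.sum_mem
  intro t _
  by_cases hmu : mu t ≤ 2 * β * (k':ℝ) * d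
  · exact Submodule.smul_mem _ _ (Submodule.subset_span ⟨t, hmu, rfl⟩)
  · rw [hacoef t hmu, zero_mul, zero_smul]
    exact Submodule.zero_mem _
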